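/- For any 2×2 unitary v with eigenvalues λ₁, λ₂ (with multiplicity), the eigenvalues of the 4×4 unitary (v ⊗ I₂)S, where S is the swap gate on ℂ²⊗ℂ², are exactly λ₁, λ₂, μ, −μ (with multiplicity), where μ is a square root of λ₁λ₂ = det v. -/

import Mathlib

open Matrix Polynomial

noncomputable section

/-- `v ⊗ I₂`: the Kronecker product of a 2×2 matrix `v` with the 2×2 identity, acting on the
first tensor factor of `ℂ² ⊗ ℂ²`. -/
def kronId (v : Matrix (Fin 2) (Fin 2) ℂ) :
    Matrix (Fin 2 × Fin 2) (Fin 2 × Fin 2) ℂ :=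
  Matrix.of fun p q => v p.1 q.1 * (if p.2 = q.2 then 1 else 0)

/-- The swap gate `S` on `ℂ² ⊗ ℂ²`: `S|xy⟩ = |yx⟩`. -/
def SwapGate : Matrix (Fin 2 × Fin 2) (Fin 2 × Fin 2) ℂ :=
  Matrix.of fun p q => if p.1 = q.2 ∧ p.2 = q.1 then 1 else 0

/-- An explicit equivalence `Fin 2 × Fin 2 ≃ Fin 4`. -/
def myE : Fin 2 × Fin 2 ≃ Fin 4 where
  toFun p := ⟨2 * p.1.val + p.2.val, by omega⟩
  invFun i := (⟨i.val / 2, by omega⟩, ⟨i.val % 2, by omega⟩)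
  left_inv := by decide
  right_inv := by decide

/-- The characteristic polynomial of the explicit 4×4 matrix arising from `(v ⊗ I₂)S`. -/
lemma charpoly_aux (a b c d : ℂ) : (!![a,b,0,0;0,0,a,b;c,d,0,0;0,0,c,d]).charpoly
    = X^4 - C (a+d)*X^3 + C ((a+d)*(a*d-b*c))*X - C ((a*d-b*c)^2) := by
  rw [Matrix.charpoly]
  have hch : charmatrix !![a,b,0,0;0,0,a,b;c,d,0,0;0,0,c,d]
      = !![X - C a, -C b, 0, 0; 0, X, -C a, -C b; -C c, -C d, X, 0; 0, 0, -C c, X - C d] := by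
    ext i j; fin_cases i <;> fin_cases j <;> simp [charmatrix_apply]
  rw [hch]
  simp [Matrix.det_succ_row_zero, Fin.sum_univ_succ,
    show (Fin.succAbove 1 2 : Fin 4) = 3 from rfl]
  ring

/-- For a 2×2 unitary `v` with eigenvalues `λ₁, λ₂` (with multiplicity), the eigenvalues of
`(v ⊗ I₂)S` are exactly `λ₁, λ₂, μ, −μ` (with multiplicity), where `μ` is any square root of
`λ₁λ₂ = det v`. -/
theorem eigenvalues_kron_swap (v : Matrix (Fin 2) (Fin 2) ℂ)
    (hv : v ∈ Matrix.unitaryGroup (Fin 2) ℂ) (lam₁ lam₂ μ : ℂ)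
    (hchar : v.charpoly = (X - C lam₁) * (X - C lam₂))
    (hμ : μ ^ 2 = lam₁ * lam₂) :
    (kronId v * SwapGate).charpoly =
      (X - C lam₁) * (X - C lam₂) * (X - C μ) * (X + C μ) := by
  have expand : (X - C lam₁) * (X - C lam₂)
      = X ^ 2 - C (lam₁ + lam₂) * X + C (lam₁ * lam₂) := by
    rw [C_add, C_mul]; ring
  have htr : v 0 0 + v 1 1 = lam₁ + lam₂ := by
    have h := Matrix.trace_eq_neg_charpoly_coeff v
    rw [hchar, expand, Matrix.trace_fin_two] at h
    simp only [coeff_add, coeff_sub, coeff_X_pow, coeff_C_mul, coeff_X, coeff_C] at h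
    simpa using h
  have hdet : v 0 0 * v 1 1 - v 0 1 * v 1 0 = lam₁ * lam₂ := by
    have h := Matrix.det_eq_sign_charpoly_coeff v
    rw [hchar, expand, Matrix.det_fin_two] at h
    simp only [coeff_add, coeff_sub, coeff_X_pow, coeff_C_mul, coeff_X, coeff_C,
      Fintype.card_fin] at h
    simpa using h
  have hM : reindex myE myE (kronId v * SwapGate)
      = !![v 0 0, v 0 1, 0, 0; 0, 0, v 0 0, v 0 1;
           v 1 0, v 1 1, 0, 0; 0, 0, v 1 0, v 1 1] := by
    ext i j
    fin_cases i <;> fin_cases j <;>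
      simp [myE, kronId, SwapGate, Matrix.mul_apply, Fintype.sum_prod_type, Fin.sum_univ_two]
  rw [← Matrix.charpoly_reindex myE (kronId v * SwapGate), hM, charpoly_aux, htr, hdet]
  have hm' : (C μ : ℂ[X]) ^ 2 = C lam₁ * C lam₂ := by
    rw [← C_mul, ← hμ, C_pow]
  simp only [C_add, C_mul, C_pow]
  linear_combination (X ^ 2 - (C lam₁ + C lam₂) * X + C lam₁ * C lam₂) * hm'

end
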